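/- Let K be a field of characteristic zero, and let (a, b, c) and (m, n, k) be two points of the double Fricke surface (x + y + z)² = 9xyz over K with (a − m)(b − n)(c − k) ≠ 0. Then the point (x, y, z) defined by x = (9(ank + bcm) − 2(a + b + c)(m + n + k))/(9(b − n)(c − k)), y = (9(bmk + acn) − 2(a + b + c)(m + n + k))/(9(a − m)(c − k)), z = (9(cmn + abk) − 2(a + b + c)(m + n + k))/(9(a − m)(b − n)) also satisfies (x + y + z)² = 9xyz. -/

import Mathlib

set_option maxHeartbeats 1000000 in
theorem fricke_aux {K : Type*} [Field K] [CharZero K] (Nx Ny Nz A B C : K)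
    (hA : A ≠ 0) (hB : B ≠ 0) (hC : C ≠ 0)
    (key : (Nx*A + Ny*B + Nz*C)^2 = Nx*Ny*Nz) :
    (Nx/(9*B*C) + Ny/(9*A*C) + Nz/(9*A*B))^2 =
    9*(Nx/(9*B*C))*(Ny/(9*A*C))*(Nz/(9*A*B)) := by
  have h9 : (9:K) ≠ 0 := by norm_num
  have hD : (9*B*C*(9*A*C)*(9*A*B)) ≠ 0 :=
    mul_ne_zero (mul_ne_zero (mul_ne_zero (mul_ne_zero h9 hB) hC)
      (mul_ne_zero (mul_ne_zero h9 hA) hC)) (mul_ne_zero (mul_ne_zero h9 hA) hB)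
  field_simp
  linear_combination key

set_option maxHeartbeats 4000000 in
theorem double_fricke_composition {K : Type*} [Field K] [CharZero K]
    (a b c m n k : K)
    (h1 : (a + b + c)^2 = 9*a*b*c) (h2 : (m + n + k)^2 = 9*m*n*k)
    (hne : (a - m)*(b - n)*(c - k) ≠ 0) :
    ((9*(a*n*k + b*c*m) - 2*(a + b + c)*(m + n + k))/(9*(b - n)*(c - k)) +
     (9*(b*m*k + a*c*n) - 2*(a + b + c)*(m + n + k))/(9*(a - m)*(c - k)) +
     (9*(c*m*n + a*b*k) - 2*(a + b + c)*(m + n + k))/(9*(a - m)*(b - n)))^2 =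
    9 * ((9*(a*n*k + b*c*m) - 2*(a + b + c)*(m + n + k))/(9*(b - n)*(c - k))) *
        ((9*(b*m*k + a*c*n) - 2*(a + b + c)*(m + n + k))/(9*(a - m)*(c - k))) *
        ((9*(c*m*n + a*b*k) - 2*(a + b + c)*(m + n + k))/(9*(a - m)*(b - n))) := by
  have ham : a - m ≠ 0 := fun h => hne (by rw [h]; ring)
  have hbn : b - n ≠ 0 := fun h => hne (by rw [h]; ring)
  have hck : c - k ≠ 0 := fun h => hne (by rw [h]; ring)
  have key : ((9*(a*n*k + b*c*m) - 2*(a + b + c)*(m + n + k))*(a - m) +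
      (9*(b*m*k + a*c*n) - 2*(a + b + c)*(m + n + k))*(b - n) +
      (9*(c*m*n + a*b*k) - 2*(a + b + c)*(m + n + k))*(c - k))^2 =
      (9*(a*n*k + b*c*m) - 2*(a + b + c)*(m + n + k)) *
      (9*(b*m*k + a*c*n) - 2*(a + b + c)*(m + n + k)) *
      (9*(c*m*n + a*b*k) - 2*(a + b + c)*(m + n + k)) := by
    linear_combination ((4)*k^4 + (16)*n*k^3 + (24)*n^2*k^2 + (16)*n^3*k + (4)*n^4 + (16)*m*k^3 + (48)*m*n*k^2 + (-36)*m*n*k^3 + (48)*m*n^2*k + (-72)*m*n^2*k^2 + (16)*m*n^3 + (-36)*m*n^3*k + (24)*m^2*k^2 + (48)*m^2*n*k + (-72)*m^2*n*k^2 + (24)*m^2*n^2 + (-72)*m^2*n^2*k + (81)*m^2*n^2*k^2 + (16)*m^3*k + (16)*m^3*n + (-36)*m^3*n*k + (4)*m^4 + (-36)*c*n*k^3 + (-108)*c*n^2*k^2 + (-108)*c*n^3*k + (-36)*c*n^4 + (-72)*c*m*n*k^2 + (-180)*c*m*n^2*k + (324)*c*m*n^2*k^2 + (-108)*c*m*n^3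 + (324)*c*m*n^3*k + (-72)*c*m^2*n*k + (-108)*c*m^2*n^2 + (162)*c*m^2*n^2*k + (-36)*c*m^3*n + (4)*c^2*k^2 + (8)*c^2*n*k + (4)*c^2*n^2 + (81)*c^2*n^2*k^2 + (162)*c^2*n^3*k + (81)*c^2*n^4 + (8)*c^2*m*k + (8)*c^2*m*n + (-36)*c^2*m*n*k + (-36)*c^2*m*n^2 + (162)*c^2*m*n^2*k + (162)*c^2*m*n^3 + (-729)*c^2*m*n^3*k + (4)*c^2*m^2 + (-36)*c^2*m^2*n + (162)*c^2*m^2*n^2 + (-36)*b*k^4 + (-108)*b*n*k^3 + (-108)*b*n^2*k^2 + (-36)*b*n^3*k + (-108)*b*m*k^3 + (-180)*b*m*n*k^2 + (324)*b*m*n*k^3 + (-72)*b*m*n^2*k + (324)*b*m*n^2*k^2 + (-108)*b*m^2*k^2 + (-72)*b*m^2*n*k + (162)*b*m^2*n*k^2 + (-36)*b*m^3*k + (8)*b*c*k^2 + (36)*b*c*k^3 + (16)*b*c*n*k + (108)*b*c*n*k^2 + (162)*b*c*n*k^3 + (8)*b*c*n^2 + (108)*b*c*n^2*k + (324)*b*c*n^2*k^2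 + (36)*b*c*n^3 + (162)*b*c*n^3*k + (16)*b*c*m*k + (72)*b*c*m*k^2 + (16)*b*c*m*n + (144)*b*c*m*n*k + (72)*b*c*m*n^2 + (-1458)*b*c*m*n^2*k^2 + (8)*b*c*m^2 + (72)*b*c*m^2*k + (72)*b*c*m^2*n + (36)*b*c*m^3 + (-162)*b*c^2*n*k^2 + (-324)*b*c^2*n^2*k + (-162)*b*c^2*n^3 + (-324)*b*c^2*m*n*k + (-324)*b*c^2*m*n^2 + (1458)*b*c^2*m*n^2*k + (-162)*b*c^2*m^2*n + (4)*b^2*k^2 + (81)*b^2*k^4 + (8)*b^2*n*k + (162)*b^2*n*k^3 + (4)*b^2*n^2 + (81)*b^2*n^2*k^2 + (8)*b^2*m*k + (-36)*b^2*m*k^2 + (162)*b^2*m*k^3 + (8)*b^2*m*n + (-36)*b^2*m*n*k + (162)*b^2*m*n*k^2 + (-729)*b^2*m*n*k^3 + (4)*b^2*m^2 + (-36)*b^2*m^2*k + (162)*b^2*m^2*k^2 + (-162)*b^2*c*k^3 + (-324)*b^2*c*n*k^2 + (-162)*b^2*c*n^2*k + (-324)*b^2*c*m*k^2 + (-324)*b^2*c*m*n*k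 + (1458)*b^2*c*m*n*k^2 + (-162)*b^2*c*m^2*k + (81)*b^2*c^2*k^2 + (162)*b^2*c^2*n*k + (81)*b^2*c^2*n^2 + (162)*b^2*c^2*m*k + (162)*b^2*c^2*m*n + (-729)*b^2*c^2*m*n*k + (81)*b^2*c^2*m^2 + (36)*a*m*n*k^2 + (36)*a*m*n^2*k + (-162)*a*m*n^2*k^2 + (36)*a*m^2*n*k + (8)*a*c*k^2 + (16)*a*c*n*k + (-36)*a*c*n*k^2 + (8)*a*c*n^2 + (-36)*a*c*n^2*k + (16)*a*c*m*k + (16)*a*c*m*n + (-72)*a*c*m*n*k + (-36)*a*c*m*n^2 + (162)*a*c*m*n^2*k + (8)*a*c*m^2 + (-36)*a*c*m^2*n + (8)*a*b*k^2 + (16)*a*b*n*k + (-36)*a*b*n*k^2 + (8)*a*b*n^2 + (-36)*a*b*n^2*k + (16)*a*b*m*k + (-36)*a*b*m*k^2 + (16)*a*b*m*n + (-72)*a*b*m*n*k + (162)*a*b*m*n*k^2 + (8)*a*b*m^2 + (-36)*a*b*m^2*k + (4)*a^2*k^2 + (8)*a^2*n*k + (-36)*a^2*n*k^2 + (4)*a^2*n^2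 + (-36)*a^2*n^2*k + (81)*a^2*n^2*k^2 + (8)*a^2*m*k + (8)*a^2*m*n + (-36)*a^2*m*n*k + (4)*a^2*m^2) * h1 + ((36)*c^3*n*k + (36)*c^3*n^2 + (36)*c^3*m*n + (-81)*c^4*n^2 + (36)*b*c^2*k^2 + (108)*b*c^2*n*k + (72)*b*c^2*n^2 + (36)*b*c^2*m*n + (-36)*b*c^2*m^2 + (-36)*b*c^3*k + (-36)*b*c^3*n + (-162)*b*c^3*n*k + (-162)*b*c^3*n^2 + (-36)*b*c^3*m + (162)*b*c^4*n + (72)*b^2*c*k^2 + (108)*b^2*c*n*k + (36)*b^2*c*n^2 + (36)*b^2*c*m*k + (-36)*b^2*c*m^2 + (-72)*b^2*c^2*k + (-81)*b^2*c^2*k^2 + (-72)*b^2*c^2*n + (-324)*b^2*c^2*n*k + (-81)*b^2*c^2*n^2 + (-72)*b^2*c^2*m + (81)*b^2*c^2*m^2 + (162)*b^2*c^3*k + (324)*b^2*c^3*n + (-81)*b^2*c^4 + (36)*b^3*k^2 + (36)*b^3*n*k + (36)*b^3*m*k + (-36)*b^3*c*k + (-162)*b^3*c*k^2 + (-36)*b^3*c*n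 + (-162)*b^3*c*n*k + (-36)*b^3*c*m + (324)*b^3*c^2*k + (162)*b^3*c^2*n + (-162)*b^3*c^3 + (-81)*b^4*k^2 + (162)*b^4*c*k + (-81)*b^4*c^2 + (36)*a*c^2*n*k + (36)*a*c^2*n^2 + (36)*a*c^2*m*n + (-162)*a*c^3*n^2 + (72)*a*b*c*k^2 + (144)*a*b*c*n*k + (72)*a*b*c*n^2 + (72)*a*b*c*m*k + (72)*a*b*c*m*n + (-36)*a*b*c^2*k + (-36)*a*b*c^2*n + (-648)*a*b*c^2*n*k + (-486)*a*b*c^2*n^2 + (-36)*a*b*c^2*m + (-162)*a*b*c^2*m*n + (324)*a*b*c^3*n + (729)*a*b*c^3*n^2 + (36)*a*b^2*k^2 + (36)*a*b^2*n*k + (36)*a*b^2*m*k + (-36)*a*b^2*c*k + (-486)*a*b^2*c*k^2 + (-36)*a*b^2*c*n + (-648)*a*b^2*c*n*k + (-36)*a*b^2*c*m + (-162)*a*b^2*c*m*k + (648)*a*b^2*c^2*k + (648)*a*b^2*c^2*n + (1458)*a*b^2*c^2*n*k + (162)*a*b^2*c^2*m + (-162)*a*b^2*c^3 + (-1458)*a*b^2*c^3*n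 + (-162)*a*b^3*k^2 + (324)*a*b^3*c*k + (729)*a*b^3*c*k^2 + (-162)*a*b^3*c^2 + (-1458)*a*b^3*c^2*k + (729)*a*b^3*c^3) * h2
  exact fricke_aux _ _ _ _ _ _ ham hbn hck key
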